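/- Let Y₁,…,Y_N be independent, X = f(Y₁,…,Y_N) square-integrable, and for S ⊆ {1,…,N} let g_S = E[X | (Yⱼ)_{j∈S}]. Then for the uniform random k-subset S_k of {1,…,N}, the map k ↦ E_{S_k}[E[g_{S_k}²]] is monotone nondecreasing in k. -/

import Mathlib

open MeasureTheory ProbabilityTheory Finset

section Aux

variable {Ω : Type*} {F : MeasurableSpace Ω} {μ : Measure Ω} [IsProbabilityMeasure μ]

/-- The conditional expectation of an `L²` function agrees a.e. with `condexpL2`. -/
lemma condexp_ae_eq_condexpL2' {m : MeasurableSpace Ω} (hm : m ≤ F) {g : Ω → ℝ}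
    (hg : MemLp g 2 μ) :
    μ[g|m] =ᵐ[μ] (condExpL2 ℝ ℝ hm (hg.toLp g) : Ω → ℝ) := by
  haveI : SigmaFinite (μ.trim hm) := inferInstance
  refine (ae_eq_condExp_of_forall_setIntegral_eq hm (hg.integrable one_le_two)
    (fun s hs hμs => integrableOn_condExpL2_of_measure_ne_top hm hμs.ne _)
    (fun s hs hμs => ?_)
    (aestronglyMeasurable_condExpL2 hm _)).symm
  rw [integral_condExpL2_eq hm (hg.toLp g) hs hμs.ne]
  exact integral_congr_ae (ae_restrict_of_ae (MemLp.coeFn_toLp hg))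

lemma memℒp_two_condexp {m : MeasurableSpace Ω} (hm : m ≤ F) {g : Ω → ℝ}
    (hg : MemLp g 2 μ) : MemLp (μ[g|m]) 2 μ := by
  have h := condexp_ae_eq_condexpL2' hm hg
  exact (Lp.memLp _).ae_eq h.symm

lemma eLpNorm_two_condexp_le {m : MeasurableSpace Ω} (hm : m ≤ F) {g : Ω → ℝ}
    (hg : MemLp g 2 μ) : eLpNorm (μ[g|m]) 2 μ ≤ eLpNorm g 2 μ := by
  rw [eLpNorm_congr_ae (condexp_ae_eq_condexpL2' hm hg)]
  refine (eLpNorm_condExpL2_le hm _).trans_eq ?_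
  exact eLpNorm_congr_ae (MemLp.coeFn_toLp hg)

lemma integral_sq_eq_sq_toReal_eLpNorm {g : Ω → ℝ} (hg : MemLp g 2 μ) :
    ∫ ω, g ω ^ 2 ∂μ = ((eLpNorm g 2 μ).toReal) ^ 2 := by
  have h1 : ∫ ω, g ω ^ 2 ∂μ = ∫ ω, ((hg.toLp g : Lp ℝ 2 μ) ω) ^ 2 ∂μ :=
    integral_congr_ae ((MemLp.coeFn_toLp hg).symm.mono fun x hx => by
      simp only [hx])
  set gL : Lp ℝ 2 μ := hg.toLp g with hgL
  have h2 : ∫ ω, (gL ω) ^ 2 ∂μ = @inner ℝ _ _ gL gL := by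
    rw [L2.inner_def]
    refine integral_congr_ae (Filter.Eventually.of_forall fun x => ?_)
    simp [RCLike.inner_apply, sq]
  have h3 : @inner ℝ _ _ gL gL = ‖gL‖ ^ 2 := real_inner_self_eq_norm_sq gL
  rw [h1, h2, h3, Lp.norm_def, eLpNorm_congr_ae (MemLp.coeFn_toLp hg)]

/-- Key Rao–Blackwell monotonicity: nested σ-algebras give monotone second moments of
conditional expectations. -/
lemma integral_sq_condexp_mono {m₁ m₂ : MeasurableSpace Ω} (h12 : m₁ ≤ m₂) (h2 : m₂ ≤ F)
    {X : Ω → ℝ} (hX : MemLp X 2 μ) :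
    ∫ ω, (μ[X|m₁]) ω ^ 2 ∂μ ≤ ∫ ω, (μ[X|m₂]) ω ^ 2 ∂μ := by
  have h1 : m₁ ≤ F := h12.trans h2
  have hg2 : MemLp (μ[X|m₂]) 2 μ := memℒp_two_condexp h2 hX
  have hg1 : MemLp (μ[X|m₁]) 2 μ := memℒp_two_condexp h1 hX
  have htower : μ[X|m₁] =ᵐ[μ] μ[μ[X|m₂]|m₁] := (condExp_condExp_of_le h12 h2).symm
  have hle : eLpNorm (μ[X|m₁]) 2 μ ≤ eLpNorm (μ[X|m₂]) 2 μ := by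
    rw [eLpNorm_congr_ae htower]
    exact eLpNorm_two_condexp_le h1 hg2
  rw [integral_sq_eq_sq_toReal_eLpNorm hg1, integral_sq_eq_sq_toReal_eLpNorm hg2]
  exact pow_le_pow_left₀ ENNReal.toReal_nonneg
    (ENNReal.toReal_mono hg2.eLpNorm_ne_top hle) 2

/-- Double-counting: averages of a monotone set function over uniform `k`-subsets are
monotone in `k`. -/
lemma avg_powersetCard_mono {α : Type*} [DecidableEq α] [Fintype α] (a : Finset α → ℝ)
    (hmono : ∀ S T : Finset α, S ⊆ T → a S ≤ a T) {k l : ℕ} (hkl : k ≤ l)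
    (hl : l ≤ Fintype.card α) :
    (∑ S ∈ powersetCard k (univ : Finset α), a S) / ((Fintype.card α).choose k : ℝ) ≤
      (∑ S ∈ powersetCard l (univ : Finset α), a S) / ((Fintype.card α).choose l : ℝ) := by
  set N := Fintype.card α with hN
  have hk : k ≤ N := hkl.trans hl
  -- card of supersets
  have hcard : ∀ S ∈ powersetCard k (univ : Finset α),
      ((powersetCard l (univ : Finset α)).filter fun T => S ⊆ T).card
        = (N - k).choose (l - k) := by
    intro S hS
    rw [mem_powersetCard] at hS
    have hSk : S.card = k := hS.2
    rw [Finset.card_bij' (fun T _ => T \ S) (fun U _ => S ∪ U) ?_ ?_ ?_ ?_]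
    · rw [card_powersetCard, card_compl, hSk]
    · intro T hT
      rw [mem_filter, mem_powersetCard] at hT
      rw [mem_powersetCard]
      refine ⟨fun x hx => ?_, ?_⟩
      · rw [mem_compl]; exact (mem_sdiff.1 hx).2
      · rw [card_sdiff_of_subset hT.2, hT.1.2, hSk]
    · intro U hU
      rw [mem_powersetCard] at hU
      have hdisj : Disjoint S U := by
        refine disjoint_left.2 fun x hxS hxU => ?_
        have := hU.1 hxU
        rw [mem_compl] at this
        exact this hxS
      rw [mem_filter, mem_powersetCard]
      exact ⟨⟨subset_univ _, by
        rw [card_union_of_disjoint hdisj, hSk, hU.2, Nat.add_sub_cancel' hkl]⟩,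
        subset_union_left⟩
    · intro T hT
      rw [mem_filter] at hT
      exact union_sdiff_of_subset hT.2
    · intro U hU
      rw [mem_powersetCard] at hU
      refine union_sdiff_cancel_left (disjoint_left.2 fun x hxS hxU => ?_)
      have := hU.1 hxU
      rw [mem_compl] at this
      exact this hxS
  -- key inequality, multiplied form
  have hkey : (∑ S ∈ powersetCard k (univ : Finset α), a S) * ((N - k).choose (l - k) : ℝ) ≤
      (∑ T ∈ powersetCard l (univ : Finset α), a T) * (l.choose k : ℝ) := by
    calc (∑ S ∈ powersetCard k (univ : Finset α), a S) * ((N - k).choose (l - k) : ℝ)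
        = ∑ S ∈ powersetCard k (univ : Finset α), ((N - k).choose (l - k) : ℝ) * a S := by
          rw [Finset.sum_mul]; exact Finset.sum_congr rfl fun S _ => mul_comm _ _
      _ ≤ ∑ S ∈ powersetCard k (univ : Finset α),
            ∑ T ∈ (powersetCard l (univ : Finset α)).filter (fun T => S ⊆ T), a T := by
          refine Finset.sum_le_sum fun S hS => ?_
          have : ((N - k).choose (l - k) : ℝ) * a S
              = ∑ T ∈ (powersetCard l (univ : Finset α)).filter (fun T => S ⊆ T), a S := by
            rw [Finset.sum_const, hcard S hS, nsmul_eq_mul]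
          rw [this]
          refine Finset.sum_le_sum fun T hT => ?_
          exact hmono S T (mem_filter.1 hT).2
      _ = ∑ T ∈ powersetCard l (univ : Finset α),
            ∑ S ∈ (powersetCard k (univ : Finset α)).filter (fun S => S ⊆ T), a T := by
          simp_rw [Finset.sum_filter]
          exact Finset.sum_comm
      _ = ∑ T ∈ powersetCard l (univ : Finset α), (l.choose k : ℝ) * a T := by
          refine Finset.sum_congr rfl fun T hT => ?_
          rw [mem_powersetCard] at hT
          have hfilter : (powersetCard k (univ : Finset α)).filter (fun S => S ⊆ T)
              = powersetCard k T := by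
            ext S
            simp only [mem_filter, mem_powersetCard]
            constructor
            · rintro ⟨⟨-, hSk⟩, hST⟩; exact ⟨hST, hSk⟩
            · rintro ⟨hST, hSk⟩; exact ⟨⟨subset_univ _, hSk⟩, hST⟩
          rw [Finset.sum_const, hfilter, card_powersetCard, hT.2, nsmul_eq_mul]
      _ = (∑ T ∈ powersetCard l (univ : Finset α), a T) * (l.choose k : ℝ) := by
          rw [Finset.sum_mul]; exact Finset.sum_congr rfl fun T _ => mul_comm _ _
  have hNk : (0 : ℝ) < (N.choose k : ℝ) := by exact_mod_cast Nat.choose_pos hk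
  have hNl : (0 : ℝ) < (N.choose l : ℝ) := by exact_mod_cast Nat.choose_pos hl
  have hlk : (0 : ℝ) < (l.choose k : ℝ) := by exact_mod_cast Nat.choose_pos hkl
  rw [div_le_div_iff₀ hNk hNl]
  -- use choose identity: N.choose l * l.choose k = N.choose k * (N-k).choose (l-k)
  have hid : (N.choose l : ℝ) * (l.choose k : ℝ)
      = (N.choose k : ℝ) * ((N - k).choose (l - k) : ℝ) := by
    exact_mod_cast congrArg (Nat.cast : ℕ → ℝ) (Nat.choose_mul (n := N) hkl)
  refine le_of_mul_le_mul_right ?_ hlk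
  calc (∑ S ∈ powersetCard k (univ : Finset α), a S) * (N.choose l : ℝ) * (l.choose k : ℝ)
      = (N.choose k : ℝ) *
        ((∑ S ∈ powersetCard k (univ : Finset α), a S) * ((N - k).choose (l - k) : ℝ)) := by
        rw [mul_assoc, hid]; ring
    _ ≤ (N.choose k : ℝ) *
        ((∑ T ∈ powersetCard l (univ : Finset α), a T) * (l.choose k : ℝ)) :=
        mul_le_mul_of_nonneg_left hkey hNk.le
    _ = (∑ S ∈ powersetCard l (univ : Finset α), a S) * (N.choose k : ℝ) * (l.choose k : ℝ) := by
        ring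

end Aux

/-- For independent `Y₁,…,Y_N`, `X = f(Y₁,…,Y_N)` square-integrable and
`g_S = E[X | (Yⱼ)_{j∈S}]`, the average of `E[g_{S}²]` over uniformly chosen `k`-subsets `S`
is monotone nondecreasing in `k`. -/
theorem avg_sq_condexp_monotone {Ω : Type*} {F : MeasurableSpace Ω}
    (μ : Measure Ω) [IsProbabilityMeasure μ] (N : ℕ)
    (Y : Fin N → Ω → ℝ) (hYm : ∀ j, Measurable (Y j))
    (hindep : iIndepFun Y μ)
    (f : (Fin N → ℝ) → ℝ) (hf : Measurable f)
    (X : Ω → ℝ) (hXf : X = fun ω => f (fun j => Y j ω)) (hX : MemLp X 2 μ) :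
    ∀ k l : ℕ, k ≤ l → l ≤ N →
      (∑ S ∈ Finset.powersetCard k (Finset.univ : Finset (Fin N)),
          ∫ ω, (condExp (⨆ j ∈ S, MeasurableSpace.comap (Y j) inferInstance) μ X ω) ^ 2 ∂μ) /
          (N.choose k : ℝ) ≤
        (∑ S ∈ Finset.powersetCard l (Finset.univ : Finset (Fin N)),
          ∫ ω, (condExp (⨆ j ∈ S, MeasurableSpace.comap (Y j) inferInstance) μ X ω) ^ 2 ∂μ) /
          (N.choose l : ℝ) := by
  intro k l hkl hlN
  have hcard : Fintype.card (Fin N) = N := Fintype.card_fin N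
  have hle : ∀ S : Finset (Fin N),
      (⨆ j ∈ S, MeasurableSpace.comap (Y j) inferInstance) ≤ F :=
    fun S => iSup_le fun j => iSup_le fun _ => (hYm j).comap_le
  have hmono : ∀ S T : Finset (Fin N), S ⊆ T →
      (∫ ω, (condExp (⨆ j ∈ S, MeasurableSpace.comap (Y j) inferInstance) μ X ω) ^ 2 ∂μ) ≤
      (∫ ω, (condExp (⨆ j ∈ T, MeasurableSpace.comap (Y j) inferInstance) μ X ω) ^ 2 ∂μ) := by
    intro S T hST
    exact integral_sq_condexp_mono (biSup_mono fun j hj => hST hj) (hle T) hX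
  have := avg_powersetCard_mono
    (fun S => ∫ ω, (condExp (⨆ j ∈ S, MeasurableSpace.comap (Y j) inferInstance) μ X ω) ^ 2 ∂μ)
    hmono hkl (by rw [hcard]; exact hlN)
  rwa [hcard] at this
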